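/- The only alternating signed k-subsets of [n] contained in A ∪ (−A), for an alternating signed k-subset A, are A and −A themselves. -/
import Mathlib


/-- A signed `k`-subset of `[n]`: a `k`-subset `A` of `{±1,…,±n}` with `A ∩ (−A) = ∅`. -/
def IsSignedKSubset (n k : ℕ) (A : Finset ℤ) : Prop :=
  A.card = k ∧ (∀ a ∈ A, a ≠ 0 ∧ a.natAbs ≤ n) ∧ ∀ a ∈ A, -a ∉ A

/-- A set of nonzero integers is alternating if any two of its elements that are consecutive
in absolute value have opposite signs. -/
def IsAlternating (A : Finset ℤ) : Prop :=
  ∀ a ∈ A, ∀ b ∈ A, a.natAbs < b.natAbs →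
    (∀ c ∈ A, ¬(a.natAbs < c.natAbs ∧ c.natAbs < b.natAbs)) → (0 < a ↔ b < 0)

/-- The element of smallest absolute value is positive. -/
def FirstPos (A : Finset ℤ) : Prop :=
  ∀ a ∈ A, (∀ b ∈ A, a.natAbs ≤ b.natAbs) → 0 < a


/-- if `A` is an alternating signed `k`-subset of `[n]`, then the only
alternating signed `k`-subsets of `[n]` contained in `A ∪ (−A)` are `A` and `−A`. -/
theorem alternating_subsets_of_union (n k : ℕ) (A B : Finset ℤ)
    (hA : IsSignedKSubset n k A) (hAalt : IsAlternating A)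
    (hB : IsSignedKSubset n k B) (hBalt : IsAlternating B)
    (hsub : B ⊆ A ∪ A.image (fun a => -a)) :
    B = A ∨ B = A.image (fun a => -a) := by
  classical
  obtain ⟨hAcard, hAel, hAsigned⟩ := hA
  obtain ⟨hBcard, hBel, hBsigned⟩ := hB
  have hAne : ∀ a ∈ A, a ≠ 0 := fun a ha => (hAel a ha).1
  have hBne : ∀ b ∈ B, b ≠ 0 := fun b hb => (hBel b hb).1
  -- every element of B is ± an element of A
  have hBpm : ∀ b ∈ B, ∃ a ∈ A, b = a ∨ b = -a := by
    intro b hb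
    rcases Finset.mem_union.mp (hsub hb) with h | h
    · exact ⟨b, h, Or.inl rfl⟩
    · obtain ⟨a, ha, rfl⟩ := Finset.mem_image.mp h
      exact ⟨a, ha, Or.inr rfl⟩
  -- natAbs is injective on A and on B
  have hAinj : Set.InjOn Int.natAbs A := by
    intro x hx y hy hxy
    have hxy' : x = y ∨ x = -y := by omega
    rcases hxy' with h | h
    · exact h
    · exfalso; subst h; exact hAsigned y hy (by simpa using hx)
  have hBinj : Set.InjOn Int.natAbs B := by
    intro x hx y hy hxy
    have hxy' : x = y ∨ x = -y := by omega
    rcases hxy' with h | h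
    · exact h
    · exfalso; subst h; exact hBsigned y hy (by simpa using hx)
  -- the images under natAbs coincide
  have hST : B.image Int.natAbs = A.image Int.natAbs := by
    apply Finset.eq_of_subset_of_card_le
    · intro m hm
      obtain ⟨b, hb, rfl⟩ := Finset.mem_image.mp hm
      obtain ⟨a, ha, h⟩ := hBpm b hb
      exact Finset.mem_image.mpr ⟨a, ha, by omega⟩
    · rw [Finset.card_image_of_injOn hAinj, Finset.card_image_of_injOn hBinj, hAcard, hBcard]
  -- for every a ∈ A there is b ∈ B of the same absolute value
  have hmatch : ∀ a ∈ A, ∃ b ∈ B, b.natAbs = a.natAbs := by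
    intro a ha
    have : a.natAbs ∈ B.image Int.natAbs := by
      rw [hST]; exact Finset.mem_image_of_mem _ ha
    obtain ⟨b, hb, h⟩ := Finset.mem_image.mp this
    exact ⟨b, hb, h⟩
  rcases Nat.eq_zero_or_pos k with hk | hk
  · left
    rw [Finset.card_eq_zero.mp (hAcard.trans hk), Finset.card_eq_zero.mp (hBcard.trans hk)]
  -- A is nonempty; pick a₀ of minimal absolute value
  have hAne' : A.Nonempty := Finset.card_pos.mp (hAcard ▸ hk)
  obtain ⟨a₀, ha₀, hmin⟩ := Finset.exists_min_image A Int.natAbs hAne'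
  -- key: membership of a in B is equivalent to membership of a₀ in B
  have key : ∀ m : ℕ, ∀ a ∈ A, a.natAbs = m → (a ∈ B ↔ a₀ ∈ B) := by
    intro m
    induction m using Nat.strong_induction_on with
    | _ m ih =>
      intro a ha hm
      by_cases h0 : a.natAbs = a₀.natAbs
      · rw [hAinj ha ha₀ h0]
      · have hlt : a₀.natAbs < a.natAbs := lt_of_le_of_ne (hmin a ha) (fun h => h0 h.symm)
        -- predecessor a' : largest absolute value below a
        have hs : a₀ ∈ A.filter (fun x => x.natAbs < a.natAbs) :=
          Finset.mem_filter.mpr ⟨ha₀, hlt⟩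
        obtain ⟨a', ha's, hmax⟩ :=
          Finset.exists_max_image (A.filter (fun x => x.natAbs < a.natAbs)) Int.natAbs ⟨a₀, hs⟩
        obtain ⟨ha'A, ha'lt⟩ := Finset.mem_filter.mp ha's
        have hconsA : ∀ c ∈ A, ¬(a'.natAbs < c.natAbs ∧ c.natAbs < a.natAbs) := by
          intro c hc ⟨h1, h2⟩
          have := hmax c (Finset.mem_filter.mpr ⟨hc, h2⟩)
          omega
        have hsA : 0 < a' ↔ a < 0 := hAalt a' ha'A a ha ha'lt hconsA
        obtain ⟨b, hb, hbabs⟩ := hmatch a ha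
        obtain ⟨b', hb', hb'abs⟩ := hmatch a' ha'A
        have hconsB : ∀ c ∈ B, ¬(b'.natAbs < c.natAbs ∧ c.natAbs < b.natAbs) := by
          intro c hc ⟨h1, h2⟩
          have hcS : c.natAbs ∈ A.image Int.natAbs := by
            rw [← hST]; exact Finset.mem_image_of_mem _ hc
          obtain ⟨c', hc'A, hc'abs⟩ := Finset.mem_image.mp hcS
          exact hconsA c' hc'A (by omega)
        have hsB : 0 < b' ↔ b < 0 := hBalt b' hb' b hb (by omega) hconsB
        have haB : a ∈ B ↔ b = a := ⟨fun h => hBinj hb h hbabs, fun h => h ▸ hb⟩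
        have ha'B : a' ∈ B ↔ b' = a' := ⟨fun h => hBinj hb' h hb'abs, fun h => h ▸ hb'⟩
        have hane : a ≠ 0 := hAne a ha
        have ha'ne : a' ≠ 0 := hAne a' ha'A
        have hkey : b = a ↔ b' = a' := by omega
        rw [haB, hkey, ← ha'B]
        exact ih a'.natAbs (by omega) a' ha'A rfl
  by_cases hmem : a₀ ∈ B
  · left
    have hsubA : A ⊆ B := fun a ha => (key a.natAbs a ha rfl).mpr hmem
    exact (Finset.eq_of_subset_of_card_le hsubA (by rw [hAcard, hBcard])).symm
  · right
    have hsubN : A.image (fun a => -a) ⊆ B := by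
      intro x hx
      obtain ⟨a, ha, rfl⟩ := Finset.mem_image.mp hx
      have hnot : a ∉ B := fun h => hmem ((key a.natAbs a ha rfl).mp h)
      obtain ⟨b, hb, habs⟩ := hmatch a ha
      have hb' : b = a ∨ b = -a := by omega
      rcases hb' with rfl | rfl
      · exact absurd hb hnot
      · exact hb
    refine (Finset.eq_of_subset_of_card_le hsubN ?_).symm
    rw [Finset.card_image_of_injective _ neg_injective, hAcard, hBcard]
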